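/- Let m ∈ ℝ, k ≥ 1, and fix α with 1 − 1/(2(2k−1)) < α < 1. Suppose ν has a finite second moment. Then for μ-almost every realization h and every i with 1 ≤ i ≤ 2k, n^{(2k−i)(1−α)} | G_n^{h,(i)}(m) − G^{(i)}(m) | → 0 as n → ∞. -/

import Mathlib

open MeasureTheory ProbabilityTheory Real Filter Topology
open scoped ENNReal NNReal

noncomputable section

/-- The value of a spin encoded as a Boolean. -/
def spin (b : Bool) : ℝ := if b then 1 else -1

/-- Total magnetization of a configuration. -/
def mag {n : ℕ} (σ : Fin n → Bool) : ℝ := ∑ i, spin (σ i)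

/-- Gibbs weight of a configuration in the random field Curie-Weiss model. -/
def gibbsWeight (β : ℝ) (h : ℕ → ℝ) (n : ℕ) (σ : Fin n → Bool) : ℝ :=
  Real.exp (β / (2 * n) * (mag σ) ^ 2 + β * ∑ i : Fin n, h i * spin (σ i))

/-- The random field Curie-Weiss Gibbs measure on configurations. -/
def gibbsMeasure (β : ℝ) (h : ℕ → ℝ) (n : ℕ) : Measure (Fin n → Bool) :=
  (ENNReal.ofReal (∑ σ : Fin n → Bool, gibbsWeight β h n σ))⁻¹ •
    ∑ σ : Fin n → Bool, ENNReal.ofReal (gibbsWeight β h n σ) • Measure.dirac σ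

/-- `μ` is the infinite product of `ν` over `ℕ` (characterised by finite marginals). -/
def IsProductMeasure (ν : Measure ℝ) (μ : Measure (ℕ → ℝ)) : Prop :=
  ∀ n : ℕ, μ.map (fun h (i : Fin n) => h (i : ℕ)) = Measure.pi fun _ : Fin n => ν

/-- extended logarithm, `elog 0 = ⊥`, `elog ⊤ = ⊤`. -/
def elog (x : ℝ≥0∞) : EReal :=
  if x = 0 then ⊥ else if x = ⊤ then ⊤ else ((Real.log x.toReal : ℝ) : EReal)

/-- A sequence of measures satisfies a large deviations principle with given speed and
rate function. -/
def HasLDP (P : ℕ → Measure ℝ) (speed : ℕ → ℝ) (I : ℝ → ℝ≥0∞) : Prop :=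
  LowerSemicontinuous I ∧ (∀ c : ℝ, IsCompact {x : ℝ | I x ≤ ENNReal.ofReal c}) ∧
    ∀ C : Set ℝ, MeasurableSet C →
      -(⨅ x ∈ interior C, (I x : EReal)) ≤
          liminf (fun n => ((((speed n)⁻¹ : ℝ) : EReal)) * elog (P n C)) atTop ∧
        limsup (fun n => ((((speed n)⁻¹ : ℝ) : EReal)) * elog (P n C)) atTop ≤
          -(⨅ x ∈ closure C, (I x : EReal))

/-- The function `G` of the random field Curie-Weiss model. -/
def G (β : ℝ) (ν : Measure ℝ) (x : ℝ) : ℝ :=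
  β / 2 * x ^ 2 - ∫ h, Real.log (Real.cosh (β * (x + h))) ∂ν

/-- The finite-volume function `G_n^h`. -/
def Gn (β : ℝ) (h : ℕ → ℝ) (n : ℕ) (x : ℝ) : ℝ :=
  β / 2 * x ^ 2 - (1 / n) * ∑ i : Fin n, Real.log (Real.cosh (β * (x + h i)))

/-- `m` is a (local or global) minimum of `G` of type `k` and strength `l`. -/
def IsMinOfType (β : ℝ) (ν : Measure ℝ) (m : ℝ) (k : ℕ) (l : ℝ) : Prop :=
  1 ≤ k ∧ 0 < l ∧ (∀ i : ℕ, 1 ≤ i → i ≤ 2 * k - 1 → iteratedDeriv i (G β ν) m = 0) ∧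
    iteratedDeriv (2 * k) (G β ν) m = l

/-- The height of a minimum `m` of `G`. -/
def height (β : ℝ) (ν : Measure ℝ) (m : ℝ) : ℝ := G β ν m - ⨅ w, G β ν w

/-- The broadness of a minimum `m` of `G`. -/
def broadness (β : ℝ) (ν : Measure ℝ) (m : ℝ) : ℝ :=
  sInf ((fun y => |y - m|) '' {y | G β ν y < G β ν m})

/-- The moderate deviations rate function. -/
def mdpRate (β l : ℝ) (k : ℕ) (x : ℝ) : ℝ≥0∞ :=
  if k = 1 then ENNReal.ofReal (x ^ 2 / (2 * (l⁻¹ - β⁻¹)))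
  else ENNReal.ofReal (l * x ^ (2 * k) / (Nat.factorial (2 * k)))

/-- The polynomial `P_{2k}`. -/
def P2k (l : ℝ) (k : ℕ) (s : ℝ) : ℝ :=
  l / (2 * (Nat.factorial (2 * k))) * s ^ (2 * k) - ∑ i ∈ Finset.Icc 1 (2 * k - 1), |s| ^ i



namespace RFCW


def p : ℕ → Polynomial ℝ
  | 0 => 0
  | 1 => Polynomial.X
  | (i+2) => (p (i+1)).derivative * (1 - Polynomial.X ^ 2)

def ell : ℕ → ℝ → ℝ
  | 0 => fun y => Real.log (Real.cosh y)
  | (i+1) => fun y => (p (i+1)).eval (Real.tanh y)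

lemma hasDerivAt_tanh (y : ℝ) : HasDerivAt Real.tanh (1 - Real.tanh y ^ 2) y := by
  have h := (Real.hasDerivAt_sinh y).div (Real.hasDerivAt_cosh y) (Real.cosh_pos y).ne'
  have hfun : Real.tanh = fun x => Real.sinh x / Real.cosh x := by
    funext x; exact Real.tanh_eq_sinh_div_cosh x
  rw [hfun]
  refine h.congr_deriv ?_
  have hc := (Real.cosh_pos y).ne'
  beta_reduce
  field_simp

lemma hasDerivAt_ell (i : ℕ) (y : ℝ) : HasDerivAt (ell i) (ell (i+1) y) y := by
  cases i with
  | zero =>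
    have h := (Real.hasDerivAt_cosh y).log (Real.cosh_pos y).ne'
    simpa [ell, p, Real.tanh_eq_sinh_div_cosh] using h
  | succ i =>
    have h := ((p (i+1)).hasDerivAt (Real.tanh y)).comp y (hasDerivAt_tanh y)
    simpa [ell, p, Polynomial.eval_mul, mul_comm, Function.comp_def] using h

lemma continuous_ell (i : ℕ) : Continuous (ell i) :=
  Differentiable.continuous (fun y => (hasDerivAt_ell i y).differentiableAt)

def Cp (P : Polynomial ℝ) : ℝ := ∑ j ∈ Finset.range (P.natDegree + 1), |P.coeff j|

lemma Cp_nonneg (P : Polynomial ℝ) : 0 ≤ Cp P :=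
  Finset.sum_nonneg fun _ _ => abs_nonneg _

lemma abs_eval_le (P : Polynomial ℝ) {t : ℝ} (ht : |t| ≤ 1) : |P.eval t| ≤ Cp P := by
  rw [Polynomial.eval_eq_sum_range]
  refine (Finset.abs_sum_le_sum_abs _ _).trans ?_
  refine Finset.sum_le_sum fun j _ => ?_
  rw [abs_mul]
  calc |P.coeff j| * |t ^ j| ≤ |P.coeff j| * 1 := by
        refine mul_le_mul_of_nonneg_left ?_ (abs_nonneg _)
        rw [abs_pow]; exact pow_le_one₀ (abs_nonneg _) ht
    _ = |P.coeff j| := mul_one _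

lemma abs_tanh_le_one (y : ℝ) : |Real.tanh y| ≤ 1 := by
  rw [Real.tanh_eq_sinh_div_cosh, abs_div, abs_of_pos (Real.cosh_pos y),
    div_le_one (Real.cosh_pos y)]
  refine abs_le_of_sq_le_sq ?_ (Real.cosh_pos y).le
  nlinarith [Real.cosh_sq_sub_sinh_sq y]

lemma abs_ell_le (i : ℕ) (y : ℝ) : |ell (i+1) y| ≤ Cp (p (i+1)) :=
  abs_eval_le _ (abs_tanh_le_one y)

lemma ell_lipschitz (i : ℕ) (y z : ℝ) :
    |ell i y - ell i z| ≤ Cp (p (i+1)) * |y - z| := by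
  have := convex_univ.norm_image_sub_le_of_norm_hasDerivWithin_le
    (f := ell i) (f' := ell (i+1)) (s := Set.univ) (C := Cp (p (i+1)))
    (fun x _ => (hasDerivAt_ell i x).hasDerivWithinAt)
    (fun x _ => by rw [Real.norm_eq_abs]; exact abs_ell_le i x)
    (Set.mem_univ z) (Set.mem_univ y)
  simpa [Real.norm_eq_abs] using this

/-- The derivatives of the quadratic part. -/
def Q (β : ℝ) : ℕ → ℝ → ℝ
  | 0 => fun x => β / 2 * x ^ 2
  | 1 => fun x => β * x
  | 2 => fun _ => β
  | (_+3) => fun _ => 0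

lemma hasDerivAt_Q (β : ℝ) (i : ℕ) (x : ℝ) : HasDerivAt (Q β i) (Q β (i+1) x) x := by
  match i with
  | 0 =>
    have := (hasDerivAt_pow 2 x).const_mul (β / 2)
    refine HasDerivAt.congr_deriv this ?_
    show β / 2 * ((2:ℕ) * x ^ (2 - 1)) = β * x
    norm_num; ring
  | 1 => simpa [Q] using (hasDerivAt_id x).const_mul β
  | 2 => exact hasDerivAt_const x _
  | (n+3) => exact hasDerivAt_const x _















lemma abs_ell_zero_le (u : ℝ) : |ell 0 u| ≤ |u| := by
  show |Real.log (Real.cosh u)| ≤ |u|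
  have h1 : 0 ≤ Real.log (Real.cosh u) :=
    Real.log_nonneg (Real.one_le_cosh u)
  rw [abs_of_nonneg h1]
  have h2 : Real.cosh u ≤ Real.exp |u| := by
    rw [← Real.cosh_abs, Real.cosh_eq]
    have h3 : Real.exp (-|u|) ≤ Real.exp |u| :=
      Real.exp_le_exp.mpr (by linarith [abs_nonneg u])
    linarith
  calc Real.log (Real.cosh u) ≤ Real.log (Real.exp |u|) :=
        Real.log_le_log (Real.cosh_pos u) h2
    _ = |u| := Real.log_exp _

section GDeriv
variable {β : ℝ} (hβ : 0 < β) {ν : Measure ℝ} [IsProbabilityMeasure ν]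

lemma hasDerivAt_sum_ell (h : ℕ → ℝ) (n i : ℕ) (x : ℝ) :
    HasDerivAt (fun x => ∑ j : Fin n, β ^ i * ell i (β * (x + h j)))
      (∑ j : Fin n, β ^ (i+1) * ell (i+1) (β * (x + h j))) x := by
  refine HasDerivAt.fun_sum fun j _ => ?_
  have haff : HasDerivAt (fun x : ℝ => β * (x + h j)) β x := by
    simpa using ((hasDerivAt_id x).add_const (h j)).const_mul β
  have := ((hasDerivAt_ell i (β * (x + h j))).comp x haff).const_mul (β ^ i)
  refine this.congr_deriv ?_
  ring

lemma Gn_iteratedDeriv (h : ℕ → ℝ) (n i : ℕ) (x : ℝ) :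
    iteratedDeriv i (Gn β h n) x
      = Q β i x - (1 / (n:ℝ)) * ∑ j : Fin n, β ^ i * ell i (β * (x + h j)) := by
  induction i generalizing x with
  | zero => simp [iteratedDeriv_zero, Gn, Q, ell]
  | succ i ih =>
    rw [iteratedDeriv_succ]
    have hfun : iteratedDeriv i (Gn β h n)
        = fun x => Q β i x - (1 / (n:ℝ)) * ∑ j : Fin n, β ^ i * ell i (β * (x + h j)) :=
      funext fun x => ih x
    rw [hfun]
    exact ((hasDerivAt_Q β i x).sub
      ((hasDerivAt_sum_ell h n i x).const_mul (1 / (n:ℝ)))).deriv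

include hβ

lemma integrable_abs_of_mom (hmom : Integrable (fun x : ℝ => x ^ 2) ν) :
    Integrable (fun a : ℝ => |a|) ν := by
  refine Integrable.mono' (hmom.add (integrable_const 1)) ?_ ?_
  · exact continuous_abs.aestronglyMeasurable
  · refine Filter.Eventually.of_forall fun a => ?_
    simp only [Pi.add_apply, Real.norm_eq_abs, abs_abs]
    nlinarith [sq_abs a, abs_nonneg a]

lemma integrable_ell_comp (hmom : Integrable (fun x : ℝ => x ^ 2) ν) (i : ℕ) (x : ℝ) :
    Integrable (fun a => β ^ i * ell i (β * (x + a))) ν := by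
  refine Integrable.const_mul ?_ _
  cases i with
  | zero =>
    refine Integrable.mono' ((integrable_const (β * |x|)).add
      ((integrable_abs_of_mom hβ hmom).const_mul β)) ?_ ?_
    · have hc : Continuous fun a : ℝ => ell 0 (β * (x + a)) :=
        (continuous_ell 0).comp (continuous_const.mul (continuous_const.add continuous_id))
      exact hc.aestronglyMeasurable
    · refine Filter.Eventually.of_forall fun a => ?_
      rw [Real.norm_eq_abs]
      calc |ell 0 (β * (x + a))| ≤ |β * (x + a)| := abs_ell_zero_le _
        _ ≤ β * |x| + β * |a| := by
            rw [abs_mul, abs_of_pos hβ]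
            calc β * |x + a| ≤ β * (|x| + |a|) :=
                  mul_le_mul_of_nonneg_left (abs_add_le x a) hβ.le
              _ = β * |x| + β * |a| := by ring
  | succ i =>
    refine Integrable.mono' (integrable_const (Cp (p (i+1)))) ?_ ?_
    · have hc : Continuous fun a : ℝ => ell (i+1) (β * (x + a)) :=
        (continuous_ell (i+1)).comp (continuous_const.mul (continuous_const.add continuous_id))
      exact hc.aestronglyMeasurable
    · exact Filter.Eventually.of_forall fun a => by
        rw [Real.norm_eq_abs]; exact abs_ell_le i _

lemma hasDerivAt_integral_ell (hmom : Integrable (fun x : ℝ => x ^ 2) ν) (i : ℕ) (x₀ : ℝ) :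
    HasDerivAt (fun x => ∫ a, β ^ i * ell i (β * (x + a)) ∂ν)
      (∫ a, β ^ (i+1) * ell (i+1) (β * (x₀ + a)) ∂ν) x₀ := by
  refine (hasDerivAt_integral_of_dominated_loc_of_lip
    (F := fun x a => β ^ i * ell i (β * (x + a)))
    (F' := fun a => β ^ (i+1) * ell (i+1) (β * (x₀ + a)))
    (bound := fun _ => β ^ (i+1) * Cp (p (i+1))) (Metric.ball_mem_nhds x₀ one_pos) ?_ ?_ ?_ ?_ ?_ ?_).2
  · refine Filter.Eventually.of_forall fun x => ?_
    have hc : Continuous fun a : ℝ => β ^ i * ell i (β * (x + a)) :=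
      continuous_const.mul ((continuous_ell i).comp
        (continuous_const.mul (continuous_const.add continuous_id)))
    exact hc.aestronglyMeasurable
  · exact integrable_ell_comp hβ hmom i x₀
  · have hc : Continuous fun a : ℝ => β ^ (i+1) * ell (i+1) (β * (x₀ + a)) :=
      continuous_const.mul ((continuous_ell (i+1)).comp
        (continuous_const.mul (continuous_const.add continuous_id)))
    exact hc.aestronglyMeasurable
  · refine Filter.Eventually.of_forall fun a => ?_
    refine LipschitzWith.lipschitzOnWith ?_
    refine LipschitzWith.of_dist_le_mul fun y z => ?_
    rw [Real.dist_eq, Real.dist_eq, Real.coe_nnabs]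
    have h1 : |β ^ i * ell i (β * (y + a)) - β ^ i * ell i (β * (z + a))|
        = β ^ i * |ell i (β * (y + a)) - ell i (β * (z + a))| := by
      rw [← mul_sub, abs_mul, abs_of_pos (pow_pos hβ i)]
    rw [h1, abs_of_nonneg (mul_nonneg (pow_pos hβ _).le (Cp_nonneg _))]
    calc β ^ i * |ell i (β * (y + a)) - ell i (β * (z + a))|
        ≤ β ^ i * (Cp (p (i+1)) * |β * (y + a) - β * (z + a)|) :=
          mul_le_mul_of_nonneg_left (ell_lipschitz i _ _) (pow_pos hβ i).le
      _ = β ^ (i+1) * Cp (p (i+1)) * |y - z| := by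
          rw [show β * (y + a) - β * (z + a) = β * (y - z) by ring, abs_mul,
            abs_of_pos hβ]
          ring
  · exact integrable_const _
  · refine Filter.Eventually.of_forall fun a => ?_
    have haff : HasDerivAt (fun x : ℝ => β * (x + a)) β x₀ := by
      simpa using ((hasDerivAt_id x₀).add_const a).const_mul β
    have := ((hasDerivAt_ell i (β * (x₀ + a))).comp x₀ haff).const_mul (β ^ i)
    refine this.congr_deriv ?_
    ring

lemma G_iteratedDeriv (hmom : Integrable (fun x : ℝ => x ^ 2) ν) (i : ℕ) (x : ℝ) :
    iteratedDeriv i (G β ν) x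
      = Q β i x - ∫ a, β ^ i * ell i (β * (x + a)) ∂ν := by
  induction i generalizing x with
  | zero => simp [iteratedDeriv_zero, G, Q, ell]
  | succ i ih =>
    rw [iteratedDeriv_succ]
    have hfun : iteratedDeriv i (G β ν)
        = fun x => Q β i x - ∫ a, β ^ i * ell i (β * (x + a)) ∂ν :=
      funext fun x => ih x
    rw [hfun]
    exact ((hasDerivAt_Q β i x).sub (hasDerivAt_integral_ell hβ hmom i x)).deriv



end GDeriv

lemma integral_pi_pow (ν : Measure ℝ) [IsProbabilityMeasure ν] (f : ℝ → ℝ) :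
    ∀ n : ℕ, ∫ y : Fin n → ℝ, ∏ j, f (y j) ∂(Measure.pi fun _ => ν)
      = (∫ x, f x ∂ν) ^ n := by
  intro n
  induction n with
  | zero => simp
  | succ n ih =>
    calc ∫ y : Fin (n+1) → ℝ, ∏ j, f (y j) ∂(Measure.pi fun _ => ν)
        = ∫ z : ℝ × (Fin n → ℝ), f z.1 * ∏ j : Fin n, f (z.2 j)
            ∂(ν.prod (Measure.pi fun _ => ν)) := by
          rw [← ((measurePreserving_piFinSuccAbove (fun _ : Fin (n+1) => ν) 0).symm).integral_comp']
          refine integral_congr_ae (Filter.Eventually.of_forall fun z => ?_)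
          simp [MeasurableEquiv.piFinSuccAbove_symm_apply, Fin.prod_univ_succ,
            Fin.insertNth_zero, Fin.zero_succAbove, Fin.cons_zero, Fin.cons_succ]
      _ = (∫ x, f x ∂ν) * (∫ x, f x ∂ν) ^ n := by
          rw [integral_prod_mul f (fun y : Fin n → ℝ => ∏ j, f (y j)), ih]
      _ = (∫ x, f x ∂ν) ^ (n+1) := (pow_succ' _ _).symm






lemma tanh_le_self {x : ℝ} (hx : 0 ≤ x) : Real.tanh x ≤ x := by
  have hmono : Monotone (fun x => x - Real.tanh x) := by
    refine monotone_of_deriv_nonneg ?_ ?_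
    · exact fun y => ((differentiable_id y).sub ((hasDerivAt_tanh y).differentiableAt))
    · intro y
      have : HasDerivAt (fun x => x - Real.tanh x) (1 - (1 - Real.tanh y ^ 2)) y :=
        (hasDerivAt_id y).sub (hasDerivAt_tanh y)
      rw [this.deriv]
      nlinarith [sq_nonneg (Real.tanh y)]
  have h0 : (0:ℝ) - Real.tanh 0 ≤ x - Real.tanh x := hmono hx
  simp only [Real.tanh_zero, sub_zero, zero_sub] at h0
  rw [Real.tanh_eq_sinh_div_cosh] at h0 ⊢
  linarith
  
lemma log_cosh_le_half_sq (x : ℝ) : Real.log (Real.cosh x) ≤ x ^ 2 / 2 := by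
  have key : ∀ y : ℝ, 0 ≤ y → Real.log (Real.cosh y) ≤ y ^ 2 / 2 := by
    intro y hy
    have hmono : MonotoneOn (fun x => x ^ 2 / 2 - Real.log (Real.cosh x)) (Set.Ici 0) := by
      refine monotoneOn_of_deriv_nonneg (convex_Ici 0) ?_ ?_ ?_
      · refine Continuous.continuousOn ?_
        refine (continuous_pow 2).div_const 2 |>.sub ?_
        exact Differentiable.continuous fun z =>
          ((Real.hasDerivAt_cosh z).log (Real.cosh_pos z).ne').differentiableAt
      · intro z _
        refine DifferentiableAt.differentiableWithinAt ?_
        exact ((differentiable_pow 2).differentiableAt.div_const 2).sub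
          ((Real.hasDerivAt_cosh z).log (Real.cosh_pos z).ne').differentiableAt
      · intro z hz
        rw [interior_Ici] at hz
        have hd : HasDerivAt (fun x => x ^ 2 / 2 - Real.log (Real.cosh x))
            (z - Real.tanh z) z := by
          have h1 : HasDerivAt (fun x : ℝ => x ^ 2 / 2) z z := by
            simpa using (hasDerivAt_pow 2 z).div_const 2
          have h2 := (Real.hasDerivAt_cosh z).log (Real.cosh_pos z).ne'
          have := h1.sub h2
          simpa [Real.tanh_eq_sinh_div_cosh, Pi.sub_def] using this
        rw [hd.deriv]
        have := tanh_le_self (le_of_lt hz)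
        linarith
    have h0 := hmono (Set.mem_Ici.mpr le_rfl) (Set.mem_Ici.mpr hy) hy
    simp [Real.cosh_zero] at h0
    linarith
  calc Real.log (Real.cosh x) = Real.log (Real.cosh |x|) := by rw [Real.cosh_abs]
    _ ≤ |x| ^ 2 / 2 := key _ (abs_nonneg x)
    _ = x ^ 2 / 2 := by rw [sq_abs]

lemma cosh_le_exp_half_sq (x : ℝ) : Real.cosh x ≤ Real.exp (x ^ 2 / 2) := by
  rw [← Real.exp_log (Real.cosh_pos x)]
  exact Real.exp_le_exp.mpr (log_cosh_le_half_sq x)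

/-- Hoeffding-type mgf bound for a centered bounded function. -/
lemma mgf_bound (ν : Measure ℝ) [IsProbabilityMeasure ν] (g : ℝ → ℝ) (hg : Continuous g)
    (c : ℝ) (hc : 0 < c) (hb : ∀ y, |g y - ∫ x, g x ∂ν| ≤ c) (t : ℝ) :
    ∫ y, Real.exp (t * (g y - ∫ x, g x ∂ν)) ∂ν ≤ Real.exp (t ^ 2 * c ^ 2 / 2) := by
  set I := ∫ x, g x ∂ν with hI
  have hint_g : Integrable g ν := by
    refine Integrable.mono' (integrable_const (c + |I|)) hg.aestronglyMeasurable ?_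
    refine Filter.Eventually.of_forall fun y => ?_
    rw [Real.norm_eq_abs]
    calc |g y| = |(g y - I) + I| := by ring_nf
      _ ≤ |g y - I| + |I| := abs_add_le _ _
      _ ≤ c + |I| := add_le_add_left (hb y) _
  set X : ℝ → ℝ := fun y => g y - I with hX
  have hXint : Integrable X ν := hint_g.sub (integrable_const I)
  have hXmean : ∫ y, X y ∂ν = 0 := by
    rw [hX]
    rw [integral_sub hint_g (integrable_const I)]
    simp [hI]
  -- pointwise convexity bound
  have hpt : ∀ y, Real.exp (t * X y)
      ≤ Real.cosh (t*c) + X y * (Real.sinh (t*c) / c) := by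
    intro y
    have key : Real.exp (t * X y)
        ≤ (1 - X y / c) / 2 * Real.exp (-(t*c)) + (1 + X y / c) / 2 * Real.exp (t*c) := by
      have hXy := abs_le.mp (hb y)
      have ha : 0 ≤ (1 - X y / c) / 2 := by
        have : X y / c ≤ 1 := (div_le_one hc).mpr hXy.2
        linarith
      have hb' : 0 ≤ (1 + X y / c) / 2 := by
        have hx1 : -c ≤ X y := hXy.1
        have : -1 ≤ X y / c := by
          rw [le_div_iff₀ hc]; linarith
        linarith
      have hab : (1 - X y / c) / 2 + (1 + X y / c) / 2 = 1 := by ring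
      have := convexOn_exp.2 (Set.mem_univ (-(t*c))) (Set.mem_univ (t*c)) ha hb' hab
      simp only [smul_eq_mul] at this
      have harg : (1 - X y / c) / 2 * (-(t*c)) + (1 + X y / c) / 2 * (t*c) = t * X y := by
        field_simp
        ring
      rwa [harg] at this
    refine key.trans (le_of_eq ?_)
    rw [Real.cosh_eq, Real.sinh_eq]
    field_simp
    ring
  -- integrate
  have hlhs_int : Integrable (fun y => Real.exp (t * X y)) ν := by
    refine Integrable.mono' (integrable_const (Real.exp (|t| * c))) ?_ ?_
    · exact (Real.continuous_exp.comp ((continuous_const.mul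
        ((hg.sub continuous_const))))).aestronglyMeasurable
    · refine Filter.Eventually.of_forall fun y => ?_
      rw [Real.norm_eq_abs, Real.abs_exp, Real.exp_le_exp]
      calc t * X y ≤ |t * X y| := le_abs_self _
        _ = |t| * |X y| := abs_mul _ _
        _ ≤ |t| * c := mul_le_mul_of_nonneg_left (hb y) (abs_nonneg t)
  have hrhs_int : Integrable (fun y =>
      Real.cosh (t*c) + X y * (Real.sinh (t*c) / c)) ν :=
    (integrable_const _).add (hXint.mul_const _)
  calc ∫ y, Real.exp (t * X y) ∂ν
      ≤ ∫ y, (Real.cosh (t*c) + X y * (Real.sinh (t*c) / c)) ∂ν :=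
        integral_mono hlhs_int hrhs_int hpt
    _ = Real.cosh (t*c) := by
        rw [integral_add (integrable_const _) (hXint.mul_const _),
          integral_mul_const, hXmean]
        simp
    _ ≤ Real.exp ((t*c) ^ 2 / 2) := cosh_le_exp_half_sq _
    _ = Real.exp (t ^ 2 * c ^ 2 / 2) := by rw [mul_pow]


lemma exp_neg_le (p : ℕ) {x : ℝ} (hx : 0 < x) :
    Real.exp (-x) ≤ (p.factorial : ℝ) / x ^ p := by
  have h2 : x ^ p / (p.factorial : ℝ) ≤ Real.exp x := by
    refine le_trans ?_ (Real.sum_le_exp_of_nonneg hx.le (p+1))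
    refine Finset.single_le_sum (f := fun i => x ^ i / (i.factorial : ℝ))
      (fun i _ => by positivity) (Finset.self_mem_range_succ p)
  have hpos : (0:ℝ) < x ^ p / (p.factorial : ℝ) := by positivity
  rw [Real.exp_neg]
  calc (Real.exp x)⁻¹ ≤ (x ^ p / (p.factorial : ℝ))⁻¹ := by
        exact inv_anti₀ hpos h2
    _ = (p.factorial : ℝ) / x ^ p := by rw [inv_div]

lemma summable_exp_bound {ρ δ : ℝ} (hρ : 0 < ρ) (hδ : 0 < δ) :
    Summable (fun n : ℕ => Real.exp (-(ρ * ((n:ℝ)+1) ^ δ))) := by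
  set p : ℕ := ⌈2/δ⌉₊ + 1 with hp
  have hp2 : 2 ≤ δ * p := by
    have h1 : (2/δ : ℝ) ≤ (p : ℝ) := by
      refine (Nat.le_ceil _).trans ?_
      rw [hp]; push_cast; linarith
    rw [div_le_iff₀ hδ] at h1
    linarith
  have hsum : Summable (fun n : ℕ => ((p.factorial : ℝ) / ρ ^ p) * (1 / ((n:ℝ)+1) ^ 2)) := by
    refine Summable.mul_left _ ?_
    have h := (summable_one_div_nat_pow (p := 2)).mpr one_lt_two
    have h2 := (summable_nat_add_iff 1).mpr h
    refine h2.congr fun n => ?_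
    push_cast
    ring
  refine Summable.of_nonneg_of_le (fun n => (Real.exp_pos _).le) (fun n => ?_) hsum
  have hbase : (0:ℝ) < (n:ℝ) + 1 := by positivity
  have hxpos : (0:ℝ) < ρ * ((n:ℝ)+1) ^ δ := mul_pos hρ (Real.rpow_pos_of_pos hbase δ)
  refine (exp_neg_le p hxpos).trans ?_
  have hxp : (ρ * ((n:ℝ)+1) ^ δ) ^ p = ρ ^ p * ((n:ℝ)+1) ^ (δ * (p:ℝ)) := by
    rw [mul_pow, ← Real.rpow_natCast (((n:ℝ)+1) ^ δ) p, ← Real.rpow_mul hbase.le]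
  rw [hxp]
  have hge : ((n:ℝ)+1) ^ (2:ℝ) ≤ ((n:ℝ)+1) ^ (δ * (p:ℝ)) :=
    Real.rpow_le_rpow_of_exponent_le (by linarith [Nat.cast_nonneg (α := ℝ) n]) hp2
  have h2eq : ((n:ℝ)+1) ^ (2:ℝ) = ((n:ℝ)+1) ^ (2:ℕ) := by
    rw [← Real.rpow_natCast ((n:ℝ)+1) 2]; norm_num
  calc (p.factorial : ℝ) / (ρ ^ p * ((n:ℝ)+1) ^ (δ * (p:ℝ)))
      ≤ (p.factorial : ℝ) / (ρ ^ p * ((n:ℝ)+1) ^ (2:ℕ)) := by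
        refine div_le_div_of_nonneg_left (by positivity) (by positivity) ?_
        rw [← h2eq]
        exact mul_le_mul_of_nonneg_left hge (by positivity)
    _ = ((p.factorial : ℝ) / ρ ^ p) * (1 / ((n:ℝ)+1) ^ 2) := by
        field_simp
  






lemma chernoff_side (ν : Measure ℝ) [IsProbabilityMeasure ν] (g : ℝ → ℝ) (hg : Continuous g)
    (c : ℝ) (hc : 0 < c) (hb : ∀ y, |g y - ∫ x, g x ∂ν| ≤ c)
    (n : ℕ) (hn : 1 ≤ n) (a : ℝ) (ha : 0 < a) :
    (Measure.pi fun _ : Fin n => ν) {y | a ≤ ∑ j : Fin n, (g (y j) - ∫ x, g x ∂ν)}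
      ≤ ENNReal.ofReal (Real.exp (-(a ^ 2) / (2 * n * c ^ 2))) := by
  set I := ∫ x, g x ∂ν with hI
  set pim : Measure (Fin n → ℝ) := Measure.pi fun _ => ν with hpim
  haveI : IsProbabilityMeasure pim := by rw [hpim]; infer_instance
  set S : (Fin n → ℝ) → ℝ := fun y => ∑ j : Fin n, (g (y j) - I) with hS
  have hScont : Continuous S := by
    refine continuous_finset_sum _ fun j _ => ?_
    exact (hg.comp (continuous_apply j)).sub continuous_const
  have hnpos : (0:ℝ) < n := by exact_mod_cast hn
  set t : ℝ := a / (n * c ^ 2) with ht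
  have htpos : 0 < t := div_pos ha (by positivity)
  have hint : Integrable (fun y => Real.exp (t * S y)) pim := by
    refine Integrable.mono' (integrable_const (Real.exp (t * (n * c)))) ?_ ?_
    · exact (Real.continuous_exp.comp (continuous_const.mul hScont)).aestronglyMeasurable
    · refine Filter.Eventually.of_forall fun y => ?_
      rw [Real.norm_eq_abs, Real.abs_exp, Real.exp_le_exp]
      refine mul_le_mul_of_nonneg_left ?_ htpos.le
      calc S y ≤ |S y| := le_abs_self _
        _ ≤ ∑ j : Fin n, |g (y j) - I| := Finset.abs_sum_le_sum_abs _ _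
        _ ≤ ∑ _j : Fin n, c := Finset.sum_le_sum fun j _ => hb _
        _ = n * c := by simp [mul_comm]
  have hmgf : mgf S pim t ≤ Real.exp (n * (t ^ 2 * c ^ 2 / 2)) := by
    have h1 : mgf S pim t = ∫ y, ∏ j : Fin n, Real.exp (t * (g (y j) - I)) ∂pim := by
      rw [mgf]
      congr 1 with y
      show Real.exp (t * S y) = _
      have hts : t * S y = ∑ j : Fin n, t * (g (y j) - I) := by
        rw [hS]; exact Finset.mul_sum _ _ _
      rw [hts, Real.exp_sum]
    rw [h1, integral_pi_pow ν (fun x => Real.exp (t * (g x - I))) n]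
    have hbase : 0 ≤ ∫ x, Real.exp (t * (g x - I)) ∂ν :=
      integral_nonneg fun x => (Real.exp_pos _).le
    calc (∫ x, Real.exp (t * (g x - I)) ∂ν) ^ n
        ≤ (Real.exp (t ^ 2 * c ^ 2 / 2)) ^ n :=
          pow_le_pow_left₀ hbase (mgf_bound ν g hg c hc hb t) n
      _ = Real.exp (n * (t ^ 2 * c ^ 2 / 2)) := (Real.exp_nat_mul _ n).symm
  have hkey := measure_ge_le_exp_mul_mgf (μ := pim) (X := S) a htpos.le hint
  have hbound : Real.exp (-t * a) * mgf S pim t ≤ Real.exp (-(a ^ 2) / (2 * n * c ^ 2)) := by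
    calc Real.exp (-t * a) * mgf S pim t
        ≤ Real.exp (-t * a) * Real.exp (n * (t ^ 2 * c ^ 2 / 2)) := by
          refine mul_le_mul_of_nonneg_left hmgf (Real.exp_pos _).le
      _ = Real.exp (-t * a + n * (t ^ 2 * c ^ 2 / 2)) := (Real.exp_add _ _).symm
      _ = Real.exp (-(a ^ 2) / (2 * n * c ^ 2)) := by
          congr 1
          rw [ht]
          field_simp
          ring
  have hfin : pim {y | a ≤ S y} ≠ ⊤ := measure_ne_top _ _
  calc pim {y | a ≤ S y} = ENNReal.ofReal (pim {y | a ≤ S y}).toReal :=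
        (ENNReal.ofReal_toReal hfin).symm
    _ ≤ ENNReal.ofReal (Real.exp (-(a ^ 2) / (2 * n * c ^ 2))) :=
        ENNReal.ofReal_le_ofReal (hkey.trans hbound)






lemma prob_main (ν : Measure ℝ) [IsProbabilityMeasure ν] (μ : Measure (ℕ → ℝ))
    [IsProbabilityMeasure μ] (hμ : IsProductMeasure ν μ)
    (g : ℝ → ℝ) (hg : Continuous g) (c0 : ℝ) (hc0 : 0 < c0) (hgb : ∀ y, |g y| ≤ c0)
    (γ : ℝ) (hγ0 : 0 ≤ γ) (hγ : γ < 1/2) :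
    ∀ᵐ h ∂μ, Tendsto (fun n : ℕ => (n:ℝ) ^ γ *
      |(1/(n:ℝ)) * ∑ j : Fin n, g (h j) - ∫ x, g x ∂ν|) atTop (𝓝 0) := by
  set I := ∫ x, g x ∂ν with hI
  have hgint : Integrable g ν :=
    Integrable.mono' (integrable_const c0) hg.aestronglyMeasurable
      (Filter.Eventually.of_forall fun y => by rw [Real.norm_eq_abs]; exact hgb y)
  have hIabs : |I| ≤ c0 := by
    rw [hI]
    calc |∫ x, g x ∂ν| ≤ ∫ x, |g x| ∂ν := by
          simpa [Real.norm_eq_abs] using norm_integral_le_integral_norm (μ := ν) g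
      _ ≤ ∫ _x, c0 ∂ν := integral_mono hgint.abs (integrable_const c0) fun y => hgb y
      _ = c0 := by simp
  set c : ℝ := 2 * c0 with hc
  have hcpos : 0 < c := by rw [hc]; linarith
  have hb : ∀ y, |g y - I| ≤ c := fun y => by
    rw [hc]
    calc |g y - I| ≤ |g y| + |I| := abs_sub _ _
      _ ≤ c0 + c0 := add_le_add (hgb y) hIabs
      _ = 2 * c0 := by ring
  -- the functional
  set f : ℕ → (ℕ → ℝ) → ℝ := fun n h => (n:ℝ) ^ γ * |(1/(n:ℝ)) * ∑ j : Fin n, g (h j) - I|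
    with hf
  -- events
  set A : ℕ → ℕ → Set (ℕ → ℝ) := fun m n => {h | 1/((m:ℝ)+1) ≤ f n h} with hA
  set δ : ℝ := 1 - 2 * γ with hδ
  have hδpos : 0 < δ := by rw [hδ]; linarith
  -- measure bound for n ≥ 1
  have hmeas_bound : ∀ m n : ℕ, 1 ≤ n →
      μ (A m n) ≤ ENNReal.ofReal (2 * Real.exp (-((1/((m:ℝ)+1)) ^ 2 / (2 * c ^ 2) * (n:ℝ) ^ δ))) := by
    intro m n hn
    set εm : ℝ := 1/((m:ℝ)+1) with hεm
    have hεpos : 0 < εm := by positivity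
    have hnpos : (0:ℝ) < n := by exact_mod_cast hn
    set a : ℝ := εm * (n:ℝ) ^ (1 - γ) with ha
    have hapos : 0 < a := mul_pos hεpos (Real.rpow_pos_of_pos hnpos _)
    -- transfer to the product measure
    have hT : Measurable (fun h : ℕ → ℝ => fun j : Fin n => h (j : ℕ)) :=
      measurable_pi_lambda _ fun j => measurable_pi_apply _
    set B : Set (Fin n → ℝ) := {y | εm ≤ (n:ℝ) ^ γ * |(1/(n:ℝ)) * ∑ j : Fin n, g (y j) - I|}
      with hB
    have hBcont : Continuous fun y : Fin n → ℝ =>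
        (n:ℝ) ^ γ * |(1/(n:ℝ)) * ∑ j : Fin n, g (y j) - I| := by
      refine continuous_const.mul (continuous_abs.comp ?_)
      exact (continuous_const.mul
        (continuous_finset_sum _ fun j _ => hg.comp (continuous_apply j))).sub continuous_const
    have hBmeas : MeasurableSet B := (isClosed_le continuous_const hBcont).measurableSet
    have hAB : A m n = (fun h : ℕ → ℝ => fun j : Fin n => h (j : ℕ)) ⁻¹' B := rfl
    have hmap : μ (A m n) = (Measure.pi fun _ : Fin n => ν) B := by
      rw [hAB, ← Measure.map_apply hT hBmeas, hμ n]
    -- inclusion into one-sided events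
    have hsub : B ⊆ {y | a ≤ ∑ j : Fin n, (g (y j) - I)}
        ∪ {y | a ≤ ∑ j : Fin n, ((-g) (y j) - ∫ x, (-g) x ∂ν)} := by
      intro y hy
      rw [hB, Set.mem_setOf_eq] at hy
      have hsum : (1/(n:ℝ)) * ∑ j : Fin n, g (y j) - I
          = (1/(n:ℝ)) * ∑ j : Fin n, (g (y j) - I) := by
        rw [Finset.sum_sub_distrib, Finset.sum_const, Finset.card_univ, Fintype.card_fin, nsmul_eq_mul]
        field_simp
      rw [hsum] at hy
      have habs : a ≤ |∑ j : Fin n, (g (y j) - I)| := by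
        have h1 : εm ≤ (n:ℝ) ^ γ * ((1/(n:ℝ)) * |∑ j : Fin n, (g (y j) - I)|) := by
          calc εm ≤ (n:ℝ) ^ γ * |(1/(n:ℝ)) * ∑ j : Fin n, (g (y j) - I)| := hy
            _ = (n:ℝ) ^ γ * ((1/(n:ℝ)) * |∑ j : Fin n, (g (y j) - I)|) := by
                rw [abs_mul, abs_of_pos (by positivity : (0:ℝ) < 1/(n:ℝ))]
        have hfactor : (n:ℝ) ^ (1 - γ) = (n:ℝ) / (n:ℝ) ^ γ := by
          rw [Real.rpow_sub hnpos, Real.rpow_one]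
        have hγpos : (0:ℝ) < (n:ℝ) ^ γ := Real.rpow_pos_of_pos hnpos γ
        have h2 : εm * (n:ℝ) ≤ |∑ j : Fin n, (g (y j) - I)| * (n:ℝ) ^ γ := by
          calc εm * (n:ℝ)
              ≤ ((n:ℝ) ^ γ * ((1/(n:ℝ)) * |∑ j : Fin n, (g (y j) - I)|)) * (n:ℝ) :=
                mul_le_mul_of_nonneg_right h1 hnpos.le
            _ = |∑ j : Fin n, (g (y j) - I)| * (n:ℝ) ^ γ := by
                field_simp
        rw [ha, hfactor, mul_div_assoc', div_le_iff₀ hγpos]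
        exact h2
      rcases le_abs.mp habs with h | h
      · exact Set.mem_union_left _ h
      · refine Set.mem_union_right _ ?_
        rw [Set.mem_setOf_eq]
        have hnegI : ∫ x, (-g) x ∂ν = -I := by
          rw [hI]; simp [integral_neg]
        rw [hnegI]
        calc a ≤ -∑ j : Fin n, (g (y j) - I) := h
          _ = ∑ j : Fin n, ((-g) (y j) - -I) := by
              rw [← Finset.sum_neg_distrib]
              exact Finset.sum_congr rfl fun j _ => by
                simp only [Pi.neg_apply, neg_sub]
                ring
    -- apply Chernoff on both sides
    have hgneg : Continuous (-g) := hg.neg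
    have hbneg : ∀ y, |(-g) y - ∫ x, (-g) x ∂ν| ≤ c := by
      intro y
      have hnegI : ∫ x, (-g) x ∂ν = -I := by rw [hI]; simp [integral_neg]
      rw [hnegI]
      simp only [Pi.neg_apply]
      have hneg : (-(g y)) - -I = -(g y - I) := by ring
      calc |(-(g y)) - -I| = |g y - I| := by rw [hneg, abs_neg]
        _ ≤ c := hb y
    have h1 := chernoff_side ν g hg c hcpos hb n hn a hapos
    have h2 := chernoff_side ν (-g) hgneg c hcpos hbneg n hn a hapos
    have hexp : -(a ^ 2) / (2 * (n:ℝ) * c ^ 2) = -(εm ^ 2 / (2 * c ^ 2) * (n:ℝ) ^ δ) := by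
      have ha2 : a ^ 2 = εm ^ 2 * (n:ℝ) ^ ((2:ℝ) * (1 - γ)) := by
        rw [ha, mul_pow, ← Real.rpow_natCast ((n:ℝ) ^ (1 - γ)) 2, ← Real.rpow_mul hnpos.le]
        norm_num [mul_comm]
      have hsplit : (n:ℝ) ^ ((2:ℝ) * (1 - γ)) = (n:ℝ) ^ δ * (n:ℝ) := by
        rw [show (2:ℝ) * (1 - γ) = δ + 1 by rw [hδ]; ring, Real.rpow_add hnpos, Real.rpow_one]
      rw [ha2, hsplit]
      field_simp
    rw [hmap]
    calc (Measure.pi fun _ : Fin n => ν) B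
        ≤ (Measure.pi fun _ : Fin n => ν) ({y | a ≤ ∑ j : Fin n, (g (y j) - I)}
            ∪ {y | a ≤ ∑ j : Fin n, ((-g) (y j) - ∫ x, (-g) x ∂ν)}) := measure_mono hsub
      _ ≤ (Measure.pi fun _ : Fin n => ν) {y | a ≤ ∑ j : Fin n, (g (y j) - I)}
            + (Measure.pi fun _ : Fin n => ν) {y | a ≤ ∑ j : Fin n, ((-g) (y j) - ∫ x, (-g) x ∂ν)} :=
          measure_union_le _ _
      _ ≤ ENNReal.ofReal (Real.exp (-(a ^ 2) / (2 * n * c ^ 2)))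
            + ENNReal.ofReal (Real.exp (-(a ^ 2) / (2 * n * c ^ 2))) := add_le_add h1 h2
      _ = ENNReal.ofReal (2 * Real.exp (-(εm ^ 2 / (2 * c ^ 2) * (n:ℝ) ^ δ))) := by
          rw [← ENNReal.ofReal_add (Real.exp_pos _).le (Real.exp_pos _).le, hexp]
          congr 1
          ring
  -- Borel-Cantelli for each m
  have hBC : ∀ m : ℕ, ∀ᵐ h ∂μ, ∀ᶠ n in atTop, h ∉ A m n := by
    intro m
    set ρ : ℝ := (1/((m:ℝ)+1)) ^ 2 / (2 * c ^ 2) with hρ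
    have hρpos : 0 < ρ := by positivity
    set w : ℕ → ℝ := fun n => if n = 0 then 1 else 2 * Real.exp (-(ρ * (n:ℝ) ^ δ)) with hw
    have hwsum : Summable w := by
      rw [← summable_nat_add_iff 1]
      refine ((summable_exp_bound hρpos hδpos).mul_left 2).congr fun n => ?_
      simp only [hw, Nat.add_eq_zero, if_neg (by omega : ¬(n + 1 = 0))]
      push_cast
      ring_nf
    have hwnn : ∀ n, 0 ≤ w n := by
      intro n
      rw [hw]
      dsimp only
      split
      · norm_num
      · positivity
    have htsum : (∑' n, μ (A m n)) ≠ ⊤ := by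
      refine ne_top_of_le_ne_top ?_ (ENNReal.tsum_le_tsum (fun n => ?_) :
        (∑' n, μ (A m n)) ≤ ∑' n, ENNReal.ofReal (w n))
      · rw [← ENNReal.ofReal_tsum_of_nonneg hwnn hwsum]
        exact ENNReal.ofReal_ne_top
      · rcases Nat.eq_zero_or_pos n with rfl | hn
        · simp only [hw, if_pos rfl]
          calc μ (A m 0) ≤ 1 := prob_le_one
            _ = ENNReal.ofReal 1 := by simp
        · have hbd := hmeas_bound m n hn
          have hwn : w n = 2 * Real.exp (-(ρ * (n:ℝ) ^ δ)) := by
            simp only [hw, if_neg (by omega : ¬(n = 0))]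
          rw [hwn]
          exact hbd
    exact ae_eventually_notMem htsum
  rw [← ae_all_iff] at hBC
  refine hBC.mono fun h hh => ?_
  rw [Metric.tendsto_atTop]
  intro ε hε
  obtain ⟨m, hm⟩ := exists_nat_one_div_lt hε
  obtain ⟨N, hN⟩ := eventually_atTop.mp (hh m)
  refine ⟨N, fun n hn => ?_⟩
  have hfn : ¬(1/((m:ℝ)+1) ≤ f n h) := hN n hn
  push_neg at hfn
  have hfnn : 0 ≤ f n h := by
    rw [hf]
    positivity
  rw [Real.dist_eq, sub_zero, abs_of_nonneg hfnn]
  calc f n h < 1/((m:ℝ)+1) := hfn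
    _ < ε := by exact_mod_cast hm

end RFCW

/-- Marcinkiewicz-Zygmund type convergence of derivatives at `m`
(display (5.4) of the paper). -/
theorem derivatives_rate_convergence
    (β : ℝ) (hβ : 0 < β) (ν : Measure ℝ) [IsProbabilityMeasure ν]
    (hmom : Integrable (fun x : ℝ => x ^ 2) ν)
    (μ : Measure (ℕ → ℝ)) [IsProbabilityMeasure μ] (hμ : IsProductMeasure ν μ)
    (m : ℝ) (k : ℕ) (hk : 1 ≤ k)
    (α : ℝ) (hα1 : 1 - 1 / (2 * (2 * (k : ℝ) - 1)) < α) (hα2 : α < 1) :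
    ∀ᵐ h ∂μ, ∀ i : ℕ, 1 ≤ i → i ≤ 2 * k →
      Tendsto (fun n : ℕ => (n : ℝ) ^ ((2 * (k : ℝ) - (i : ℝ)) * (1 - α)) *
          |iteratedDeriv i (Gn β h n) m - iteratedDeriv i (G β ν) m|) atTop
        (𝓝 0) := by
  refine ae_all_iff.mpr fun i => ?_
  by_cases hi : 1 ≤ i ∧ i ≤ 2 * k
  swap
  · exact Filter.Eventually.of_forall fun h h1 h2 => absurd ⟨h1, h2⟩ hi
  obtain ⟨hi1, hi2⟩ := hi
  obtain ⟨j, rfl⟩ : ∃ j, i = j + 1 := ⟨i - 1, by omega⟩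
  set γ : ℝ := (2 * (k:ℝ) - ((j + 1 : ℕ) : ℝ)) * (1 - α) with hγdef
  have hk1 : (1:ℝ) ≤ (k:ℝ) := by exact_mod_cast hk
  have hK : (1:ℝ) ≤ 2 * (k:ℝ) - 1 := by linarith
  have hαlt : 1 - α < 1 / (2 * (2 * (k:ℝ) - 1)) := by linarith
  have h1a : 0 < 1 - α := by linarith
  have h2ki : ((j + 1 : ℕ) : ℝ) ≤ 2 * (k:ℝ) := by exact_mod_cast hi2
  have hj1 : (1:ℝ) ≤ ((j + 1 : ℕ) : ℝ) := by exact_mod_cast hi1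
  have hγ0 : 0 ≤ γ := mul_nonneg (by linarith) h1a.le
  have hγhalf : γ < 1/2 := by
    have ht1 : 2 * (k:ℝ) - ((j + 1 : ℕ) : ℝ) ≤ 2 * (k:ℝ) - 1 := by linarith
    calc γ ≤ (2 * (k:ℝ) - 1) * (1 - α) := by
          rw [hγdef]
          exact mul_le_mul_of_nonneg_right ht1 h1a.le
      _ < (2 * (k:ℝ) - 1) * (1 / (2 * (2 * (k:ℝ) - 1))) :=
          mul_lt_mul_of_pos_left hαlt (by linarith)
      _ = 1/2 := by field_simp
  set g : ℝ → ℝ := fun y => β ^ (j + 1) * RFCW.ell (j + 1) (β * (m + y)) with hgdef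
  have hgcont : Continuous g := continuous_const.mul ((RFCW.continuous_ell (j + 1)).comp
    (continuous_const.mul (continuous_const.add continuous_id)))
  set c0 : ℝ := β ^ (j + 1) * RFCW.Cp (RFCW.p (j + 1)) + 1 with hc0def
  have hcp : (0:ℝ) ≤ β ^ (j + 1) * RFCW.Cp (RFCW.p (j + 1)) :=
    mul_nonneg (pow_pos hβ _).le (RFCW.Cp_nonneg _)
  have hc0pos : 0 < c0 := by rw [hc0def]; linarith
  have hgb : ∀ y, |g y| ≤ c0 := by
    intro y
    rw [hgdef]
    calc |β ^ (j + 1) * RFCW.ell (j + 1) (β * (m + y))|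
        = β ^ (j + 1) * |RFCW.ell (j + 1) (β * (m + y))| := by
          rw [abs_mul, abs_of_pos (pow_pos hβ _)]
      _ ≤ β ^ (j + 1) * RFCW.Cp (RFCW.p (j + 1)) :=
          mul_le_mul_of_nonneg_left (RFCW.abs_ell_le j _) (pow_pos hβ _).le
      _ ≤ c0 := by rw [hc0def]; linarith
  have hmain := RFCW.prob_main ν μ hμ g hgcont c0 hc0pos hgb γ hγ0 hγhalf
  refine hmain.mono fun h hh _ _ => ?_
  refine Tendsto.congr (fun n => ?_) hh
  congr 1
  rw [RFCW.Gn_iteratedDeriv (β := β) h n (j + 1) m,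
    RFCW.G_iteratedDeriv hβ hmom (j + 1) m, abs_sub_comm]
  congr 1
  simp only [hgdef]
  ring
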